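/- Let p and q be coprime integers with q ≥ 2 and |p| ≥ 2, and b ∈ {0,1,…,q−1}. Let M_b(p,q,N) be the number of n with 1 ≤ n ≤ N such that the digit b does not appear among the digits of the q-adic expansion of p^n (interpreted via the periodic q-adic digit sequence of p^n in ℤ_q when b = 0 is handled as for b ≠ 0 with base-q digits). Then there exists a constant C, depending only on p and q, such that M_b(p,q,N) ≤ C · N^{log(q−1)/log q} for all N ≥ 1. -/

import Mathlib

lemma pp_bound {r a : ℕ} (hr : r.Prime) (ha : 2 ≤ a) (hra : ¬ r ∣ a) :
    ∃ D : ℕ, ∀ n j : ℕ, 0 < n → (r:ℤ)^(D + j) ∣ (a:ℤ)^n - 1 → r^j ∣ n := by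
  have ha1 : (1:ℤ) < (a:ℤ) := by exact_mod_cast ha
  obtain ⟨m, hm0, hlte⟩ :
      ∃ m : ℕ, 0 < m ∧ ∀ n : ℕ, emultiplicity (r:ℤ) (((a:ℤ)^m)^n - 1^n)
        = emultiplicity (r:ℤ) ((a:ℤ)^m - 1) + emultiplicity r n := by
    have hxr : ∀ m : ℕ, ¬ (r:ℤ) ∣ (a:ℤ)^m := by
      intro m hdvd
      have : (r:ℕ) ∣ a^m := by exact_mod_cast hdvd
      exact hra (hr.dvd_of_dvd_pow this)
    rcases hr.eq_two_or_odd' with rfl | hodd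
    · refine ⟨2, by norm_num, fun n => ?_⟩
      have hodd : a % 2 = 1 := Nat.odd_iff.mp (Nat.odd_iff.mpr (by omega)) -- fix
      obtain ⟨t, ht⟩ : ∃ t, a = 2*t+1 := ⟨a/2, by omega⟩
      have h4 : (4:ℤ) ∣ (a:ℤ)^2 - 1 := by
        refine ⟨(t:ℤ)*t + t, ?_⟩
        have : (a:ℤ) = 2*t+1 := by exact_mod_cast congrArg (Nat.cast : ℕ → ℤ) ht
        rw [this]; ring
      have h5 := Int.two_pow_sub_pow' (x := (a:ℤ)^2) (y := 1) n h4 (hxr 2)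
      rw [show ((2:ℕ):ℤ) = (2:ℤ) from rfl, h5]; congr 1; exact_mod_cast Int.natCast_emultiplicity 2 n
    · refine ⟨r - 1, by have := hr.two_le; omega, fun n => ?_⟩
      haveI : Fact r.Prime := ⟨hr⟩
      have hm : (r:ℤ) ∣ (a:ℤ)^(r-1) - 1 := by
        have h0 : ((a : ZMod r)) ≠ 0 := by
          rw [Ne, ZMod.natCast_eq_zero_iff]; exact hra
        have := ZMod.pow_card_sub_one_eq_one h0
        have h2 : (((a:ℤ)^(r-1) - 1 : ℤ) : ZMod r) = 0 := by push_cast [this]; ring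
        exact (ZMod.intCast_zmod_eq_zero_iff_dvd _ _).mp h2
      exact Int.emultiplicity_pow_sub_pow hr hodd hm (hxr (r-1)) n
  have hne : (a:ℤ)^m - 1 ≠ 0 := by
    have : (1:ℤ) < (a:ℤ)^m := one_lt_pow₀ ha1 hm0.ne'
    omega
  have hfin : FiniteMultiplicity (r:ℤ) ((a:ℤ)^m - 1) := by
    rw [Int.finiteMultiplicity_iff]
    exact ⟨by simpa using hr.ne_one, hne⟩
  set D := multiplicity (r:ℤ) ((a:ℤ)^m - 1) with hD
  refine ⟨D, fun n j hn hdvd => ?_⟩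
  have h1 : ((D + j : ℕ) : ℕ∞) ≤ emultiplicity (r:ℤ) ((a:ℤ)^n - 1) :=
    le_emultiplicity_of_pow_dvd hdvd
  have hdd : (a:ℤ)^n - 1 ∣ ((a:ℤ)^m)^n - 1^n := by
    have h := sub_dvd_pow_sub_pow ((a:ℤ)^n) 1 m
    rw [one_pow] at h
    rw [one_pow, ← pow_mul, mul_comm m n, pow_mul]
    exact h
  have h2 := (emultiplicity_le_emultiplicity_of_dvd_right hdd).trans (hlte n).le
  rw [hfin.emultiplicity_eq_multiplicity] at h2
  have h3 : ((D:ℕ∞) + j) ≤ (D:ℕ∞) + emultiplicity r n := by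
    calc ((D:ℕ∞) + j) = ((D + j : ℕ) : ℕ∞) := by push_cast; ring
    _ ≤ _ := h1.trans h2
  have h4 : (j:ℕ∞) ≤ emultiplicity r n :=
    (WithTop.add_le_add_iff_left (by simp : (D:ℕ∞) ≠ ⊤)).mp h3
  exact pow_dvd_of_le_emultiplicity h4

lemma digit_mem {q : ℕ} (hq : 1 < q) : ∀ (i x : ℕ), i < (Nat.digits q x).length →
    x / q^i % q ∈ Nat.digits q x := by
  intro i
  induction i with
  | zero =>
    intro x hx
    have hx0 : 0 < x := by
      rcases Nat.eq_zero_or_pos x with rfl | h; · simp at hx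
      · exact h
    rw [Nat.digits_def' hq hx0]
    simp
  | succ i ih =>
    intro x hx
    have hx0 : 0 < x := by
      rcases Nat.eq_zero_or_pos x with rfl | h; · simp at hx
      · exact h
    rw [Nat.digits_def' hq hx0] at hx ⊢
    simp only [List.length_cons] at hx
    have hmem := ih (x / q) (by omega)
    have heq : x / q ^ (i + 1) = x / q / q ^ i := by
      rw [Nat.div_div_eq_div_mul, ← pow_succ']
    rw [heq]
    exact List.mem_cons_of_mem _ hmem

lemma digits_len_le_iff {q x k : ℕ} (hq : 1 < q) :
    (Nat.digits q x).length ≤ k ↔ x < q^k := by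
  constructor
  · intro h
    exact lt_of_lt_of_le (Nat.lt_base_pow_length_digits hq)
      (Nat.pow_le_pow_right (by omega) h)
  · intro h
    by_contra hc
    push_neg at hc
    have hx0 : x ≠ 0 := by
      rintro rfl; simp at hc
    have h1 : q ^ (Nat.digits q x).length ≤ q * x := Nat.base_pow_length_digits_le q x hq hx0
    have h2 : q ^ (k + 1) ≤ q ^ (Nat.digits q x).length := Nat.pow_le_pow_right (by omega) hc
    rw [pow_succ'] at h2
    have h3 : q ^ k ≤ x := Nat.le_of_mul_le_mul_left (h2.trans h1) (by omega)
    omega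

lemma mem_digits_mod {q : ℕ} (hq : 1 < q) (k x d : ℕ) (hd : d ∈ Nat.digits q (x % q^k)) :
    d ∈ Nat.digits q x := by
  rcases Nat.eq_zero_or_pos (x / q^k) with h0 | hpos
  · have hlt : x < q^k := by
      rcases Nat.lt_or_ge x (q^k) with h | h
      · exact h
      · exfalso
        have := Nat.div_pos h (pow_pos (by omega) k)
        omega
    rwa [Nat.mod_eq_of_lt hlt] at hd
  · have hlen : (Nat.digits q (x % q^k)).length ≤ k :=
      (digits_len_le_iff hq).mpr (Nat.mod_lt _ (pow_pos (by omega) k))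
    have heq := Nat.digits_append_zeroes_append_digits
      (b := q) (k := k - (Nat.digits q (x % q^k)).length) (m := x / q^k) (n := x % q^k)
      hq hpos
    rw [show (Nat.digits q (x % q^k)).length + (k - (Nat.digits q (x % q^k)).length) = k
      from by omega, Nat.mod_add_div] at heq
    rw [← heq]
    simp only [List.append_assoc, List.mem_append]
    exact Or.inl hd

lemma digits_determine {q : ℕ} (hq : 0 < q) : ∀ k x y, x < q^k → y < q^k →
    (∀ i, i < k → x / q^i % q = y / q^i % q) → x = y := by
  intro k
  induction k with
  | zero => intro x y hx hy _; simp at hx hy; omega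
  | succ k ih =>
    intro x y hx hy h
    have h0 := h 0 (Nat.succ_pos _)
    simp only [pow_zero, Nat.div_one] at h0
    have hxq : x / q < q^k := by
      rw [Nat.div_lt_iff_lt_mul hq, ← pow_succ]; exact hx
    have hyq : y / q < q^k := by
      rw [Nat.div_lt_iff_lt_mul hq, ← pow_succ]; exact hy
    have hdiv : x / q = y / q := by
      refine ih (x/q) (y/q) hxq hyq (fun i hi => ?_)
      have h1 := h (i+1) (by omega)
      simp only [Nat.div_div_eq_div_mul]
      rwa [pow_succ'] at h1
    have e1 := Nat.div_add_mod x q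
    have e2 := Nat.div_add_mod y q
    rw [← e1, ← e2, hdiv, h0]

lemma card_avoid {q b : ℕ} (hq : 2 ≤ q) (hb : b < q) (k : ℕ) :
    ((Finset.range (q^k)).filter (fun x => ∀ i, i < k → x / q^i % q ≠ b)).card
      ≤ (q-1)^k := by
  classical
  have hcard : Fintype.card (Fin k → Fin (q-1)) = (q-1)^k := by
    rw [Fintype.card_fun, Fintype.card_fin, Fintype.card_fin]
  rw [← hcard, ← Finset.card_univ]
  set e : ℕ → ℕ := fun d => if d < b then d else d - 1 with he
  apply Finset.card_le_card_of_injOn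
    (fun x => fun i : Fin k => (⟨min (e (x / q^(i:ℕ) % q)) (q-2),
      lt_of_le_of_lt (min_le_right _ _) (by omega)⟩ : Fin (q-1)))
    (fun x _ => Finset.mem_univ _)
  intro x hx y hy hf
  simp only [Finset.mem_coe, Finset.mem_filter, Finset.mem_range] at hx hy
  refine digits_determine (by omega) k x y hx.1 hy.1 (fun i hi => ?_)
  have hfx := congrFun hf ⟨i, hi⟩
  simp only [Fin.mk.injEq] at hfx
  have hdx : x / q^i % q < q := Nat.mod_lt _ (by omega)
  have hdy : y / q^i % q < q := Nat.mod_lt _ (by omega)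
  have hbx : x / q^i % q ≠ b := hx.2 i hi
  have hby : y / q^i % q ≠ b := hy.2 i hi
  have hex : e (x / q^i % q) ≤ q - 2 := by
    rw [he]; dsimp only
    split_ifs with h <;> omega
  have hey : e (y / q^i % q) ≤ q - 2 := by
    rw [he]; dsimp only
    split_ifs with h <;> omega
  rw [min_eq_left hex, min_eq_left hey] at hfx
  rw [he] at hfx; dsimp only at hfx
  split_ifs at hfx with h1 h2 h2 <;> omega

lemma card_avoid_digits {q b : ℕ} (hq3 : 3 ≤ q) (hb : b < q) (k : ℕ) :
    ((Finset.range (q^k)).filter (fun x => b ∉ Nat.digits q x)).card ≤ 2 * (q-1)^k := by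
  classical
  have hq : 2 ≤ q := by omega
  have hq1 : 1 < q := by omega
  rcases Nat.eq_zero_or_pos b with rfl | hb0
  · induction k with
    | zero =>
      calc ((Finset.range (q^0)).filter _).card ≤ (Finset.range (q^0)).card :=
            Finset.card_filter_le _ _
        _ ≤ 2 * (q-1)^0 := by simp
    | succ k ih =>
      have hsplit : Finset.range (q^(k+1)) =
          Finset.range (q^k) ∪ Finset.Ico (q^k) (q^(k+1)) := by
        simp only [Finset.range_eq_Ico]
        exact (Finset.Ico_union_Ico_eq_Ico (Nat.zero_le _)
          (Nat.pow_le_pow_right (by omega) (by omega))).symm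
      rw [hsplit, Finset.filter_union]
      refine le_trans (Finset.card_union_le _ _) ?_
      have h2 : ((Finset.Ico (q^k) (q^(k+1))).filter (fun x => 0 ∉ Nat.digits q x)).card
          ≤ (q-1)^(k+1) := by
        refine le_trans (Finset.card_le_card (fun x hx => ?_)) (card_avoid hq hb (k+1))
        simp only [Finset.mem_filter, Finset.mem_Ico] at hx
        simp only [Finset.mem_filter, Finset.mem_range]
        refine ⟨hx.1.2, fun i hi => ?_⟩
        have hlen : ¬ (Nat.digits q x).length ≤ k := by
          rw [digits_len_le_iff hq1]; omega
        intro hzero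
        exact hx.2 (hzero ▸ digit_mem hq1 i x (by omega))
      have h4 : 2 * (q-1)^k ≤ (q-1)^(k+1) := by
        rw [pow_succ']
        exact Nat.mul_le_mul_right _ (show 2 ≤ q-1 by omega)
      calc _ ≤ 2 * (q-1)^k + (q-1)^(k+1) := Nat.add_le_add ih h2
        _ ≤ (q-1)^(k+1) + (q-1)^(k+1) := Nat.add_le_add_right h4 _
        _ = 2 * (q-1)^(k+1) := by ring
  · refine le_trans (Finset.card_le_card (fun x hx => ?_)) (le_trans (card_avoid hq hb k)
      (Nat.le_mul_of_pos_left _ (by omega)))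
    simp only [Finset.mem_filter, Finset.mem_range] at hx ⊢
    refine ⟨hx.1, fun i hi hbeq => ?_⟩
    by_cases hlen : i < (Nat.digits q x).length
    · exact hx.2 (hbeq ▸ digit_mem hq1 i x hlen)
    · push_neg at hlen
      have hxlt : x < q ^ (Nat.digits q x).length := Nat.lt_base_pow_length_digits hq1
      have hxsmall : x < q^i := lt_of_lt_of_le hxlt (Nat.pow_le_pow_right (by omega) hlen)
      have hz : x / q^i = 0 := Nat.div_eq_of_lt hxsmall
      rw [hz, Nat.zero_mod] at hbeq
      omega

lemma key_lemma {a q : ℕ} (ha : 2 ≤ a) (hq : 2 ≤ q) (hcop : Nat.Coprime a q) :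
    ∃ k0 : ℕ, 1 ≤ k0 ∧ ∀ k n : ℕ, k0 ≤ k → 0 < n →
      (q:ℤ)^k ∣ (a:ℤ)^n - 1 → q^(k - k0) ∣ n := by
  have hDex : ∀ r ∈ q.primeFactors, ∃ D : ℕ, ∀ n j : ℕ, 0 < n →
      (r:ℤ)^(D + j) ∣ (a:ℤ)^n - 1 → r^j ∣ n := by
    intro r hr
    have hrp : r.Prime := Nat.prime_of_mem_primeFactors hr
    have hrq : r ∣ q := Nat.dvd_of_mem_primeFactors hr
    have hra : ¬ r ∣ a := by
      intro hd
      have h1 : r ∣ 1 := hcop ▸ Nat.dvd_gcd hd hrq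
      exact hrp.one_lt.ne' (Nat.dvd_one.mp h1)
    exact pp_bound hrp ha hra
  choose! D hD using hDex
  refine ⟨1 + q.primeFactors.sup D, Nat.le_add_right _ _, fun k n hk hn hdvd => ?_⟩
  set k0 := 1 + q.primeFactors.sup D with hk0
  have hq0 : q ≠ 0 := by omega
  rw [← Nat.factorization_le_iff_dvd (pow_ne_zero _ hq0) hn.ne', Nat.factorization_pow]
  rw [Finsupp.le_def]
  intro r
  rw [Finsupp.smul_apply, smul_eq_mul]
  by_cases hr : r ∈ q.primeFactors
  · have hrp : r.Prime := Nat.prime_of_mem_primeFactors hr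
    set α := q.factorization r with hα
    have hα1 : 1 ≤ α := (Nat.Prime.factorization_pos_of_dvd hrp hq0
      (Nat.dvd_of_mem_primeFactors hr))
    rw [← Nat.Prime.pow_dvd_iff_le_factorization hrp hn.ne']
    apply hD r hr n _ hn
    have hsup : D r ≤ q.primeFactors.sup D := Finset.le_sup hr
    have h1 : D r + (k - k0) * α ≤ k * α := by
      have : k * α = (k - k0) * α + k0 * α := by
        rw [← Nat.add_mul]; congr 1; omega
      have h2 : k0 ≤ k0 * α := Nat.le_mul_of_pos_right _ hα1
      omega
    have h2 : (r:ℤ)^(k * α) ∣ (q:ℤ)^k := by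
      have hnat : r^(k * α) ∣ q^k := by
        rw [mul_comm k α, pow_mul]
        exact pow_dvd_pow_of_dvd (Nat.ordProj_dvd q r) k
      exact_mod_cast Int.natCast_dvd_natCast.mpr hnat
    calc (r:ℤ)^(D r + (k - k0) * α) ∣ (r:ℤ)^(k * α) := pow_dvd_pow _ h1
      _ ∣ (q:ℤ)^k := h2
      _ ∣ (a:ℤ)^n - 1 := hdvd
  · have : q.factorization r = 0 := by
      rwa [← Nat.support_factorization, Finsupp.notMem_support_iff] at hr
    simp [this]

lemma ofdigits_replicate_one : ∀ L : ℕ, Nat.ofDigits 2 (List.replicate L 1) + 1 = 2^L := by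
  intro L
  induction L with
  | zero => simp [Nat.ofDigits]
  | succ L ih =>
    rw [List.replicate_succ, Nat.ofDigits_cons, pow_succ]
    omega

lemma one_mem_digits_two {m : ℕ} (hm : m ≠ 0) : 1 ∈ Nat.digits 2 m := by
  have hne : Nat.digits 2 m ≠ [] := Nat.digits_ne_nil_iff_ne_zero.mpr hm
  have h0 := Nat.getLast_digit_ne_zero 2 hm
  have hmem := List.getLast_mem hne
  have hlt := Nat.digits_lt_base (by norm_num) hmem
  have : (Nat.digits 2 m).getLast hne = 1 := by omega
  rwa [this] at hmem

theorem main_nat {a q : ℕ} (ha : 2 ≤ a) (hq : 2 ≤ q) (hcop : Nat.Coprime a q)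
    (b : ℕ) (hb : b < q) :
    ∃ C : ℝ, 0 < C ∧ ∀ N : ℕ, 1 ≤ N →
      (((Finset.Icc 1 N).filter (fun n => b ∉ Nat.digits q (a ^ n))).card : ℝ) ≤
        C * (N : ℝ) ^ (Real.log ((q:ℝ) - 1) / Real.log q) := by
  classical
  obtain ⟨k0, hk01, hkey⟩ := key_lemma ha hq hcop
  have hqpos : 0 < q := by omega
  -- collision implies large divisibility
  have hclaim : ∀ N : ℕ, 1 ≤ N → ∀ n m : ℕ, n ∈ Finset.Icc 1 N → m ∈ Finset.Icc 1 N →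
      n < m → a^n % q^(k0 + Nat.log q N + 1) = a^m % q^(k0 + Nat.log q N + 1) → False := by
    intro N hN n m hn hm hnm heq
    set k := k0 + Nat.log q N + 1 with hk
    simp only [Finset.mem_Icc] at hn hm
    have hmod : (a^n : ℕ) ≡ a^m [MOD q^k] := heq
    have hdvd : (q:ℤ)^k ∣ (a:ℤ)^m - (a:ℤ)^n := by
      have := hmod.dvd
      push_cast at this ⊢
      exact this
    have hfac : (a:ℤ)^m - (a:ℤ)^n = ((a:ℤ)^(m-n) - 1) * (a:ℤ)^n := by
      have hmn : m - n + n = m := by omega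
      calc (a:ℤ)^m - (a:ℤ)^n = (a:ℤ)^(m-n+n) - (a:ℤ)^n := by rw [hmn]
        _ = ((a:ℤ)^(m-n) - 1) * (a:ℤ)^n := by rw [pow_add]; ring
    have hcop2 : IsCoprime ((q:ℤ)^k) ((a:ℤ)^n) :=
      (Nat.isCoprime_iff_coprime.mpr hcop.symm).pow
    have hdvd2 : (q:ℤ)^k ∣ (a:ℤ)^(m-n) - 1 := by
      rw [hfac] at hdvd
      exact hcop2.dvd_of_dvd_mul_right hdvd
    have hdvd3 : q^(k - k0) ∣ (m - n) :=
      hkey k (m - n) (by omega) (by omega) hdvd2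
    have hle : q^(k - k0) ≤ m - n := Nat.le_of_dvd (by omega) hdvd3
    have hNlt : N < q^(Nat.log q N + 1) := Nat.lt_pow_succ_log_self (by omega) N
    have : k - k0 = Nat.log q N + 1 := by omega
    rw [this] at hle
    omega
  have hinjcard : ∀ N : ℕ, 1 ≤ N →
      (((Finset.Icc 1 N).filter (fun n => b ∉ Nat.digits q (a ^ n))).card) ≤
      ((Finset.range (q^(k0 + Nat.log q N + 1))).filter
        (fun x => b ∉ Nat.digits q x)).card := by
    intro N hN
    set k := k0 + Nat.log q N + 1 with hk
    apply Finset.card_le_card_of_injOn (fun n => a^n % q^k)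
    · intro n hn
      simp only [Finset.mem_coe, Finset.mem_filter, Finset.mem_range] at hn ⊢
      refine ⟨Nat.mod_lt _ (pow_pos hqpos k), fun hmem => hn.2 ?_⟩
      exact mem_digits_mod (by omega) k (a^n) b hmem
    · intro n hn m hm heq
      simp only [Finset.coe_filter, Set.mem_setOf_eq] at hn hm
      rcases lt_trichotomy n m with h | h | h
      · exact absurd (hclaim N hN n m hn.1 hm.1 h heq) (fun f => f)
      · exact h
      · exact absurd (hclaim N hN m n hm.1 hn.1 h heq.symm) (fun f => f)
  rcases Nat.lt_or_ge q 3 with hq2 | hq3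
  · -- q = 2
    have hq2' : q = 2 := by omega
    subst hq2'
    have h0 : Real.log (((2:ℕ):ℝ) - 1) / Real.log ((2:ℕ):ℝ) = 0 := by
      norm_num
    interval_cases b
    · -- b = 0
      refine ⟨((2*k0+2 : ℕ) : ℝ), by exact_mod_cast Nat.succ_pos _, fun N hN => ?_⟩
      rw [h0, Real.rpow_zero, mul_one]
      have hsub : (Finset.Icc 1 N).filter (fun n => 0 ∉ Nat.digits 2 (a^n)) ⊆
          Finset.Icc 1 (2*k0+1) := by
        intro n hn
        simp only [Finset.mem_filter, Finset.mem_Icc] at hn ⊢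
        obtain ⟨⟨hn1, hnN⟩, hdig⟩ := hn
        refine ⟨hn1, ?_⟩
        by_contra hbig
        push_neg at hbig
        set Ln := (Nat.digits 2 (a^n)).length with hLn
        have hrep : Nat.digits 2 (a^n) = List.replicate Ln 1 := by
          refine List.eq_replicate_iff.mpr ⟨rfl, fun d hd => ?_⟩
          have h2 := Nat.digits_lt_base (by norm_num) hd
          have h3 : d ≠ 0 := fun hz => hdig (hz ▸ hd)
          omega
        have hsum : a^n + 1 = 2^Ln := by
          have h4 := Nat.ofDigits_digits 2 (a^n)
          rw [hrep] at h4
          have h5 := ofdigits_replicate_one Ln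
          omega
        have hL : n + 1 ≤ Ln := by
          have h2n : 2^n ≤ a^n := Nat.pow_le_pow_left ha n
          have h6 : 2^n < 2^Ln := by omega
          exact (Nat.pow_lt_pow_iff_right (by norm_num)).mp h6
        have hdvd : ((2:ℕ):ℤ)^Ln ∣ (a:ℤ)^(2*n) - 1 := by
          have he : (((2:ℕ):ℤ))^Ln = (a:ℤ)^n + 1 := by exact_mod_cast hsum.symm
          have hfac2 : (a:ℤ)^(2*n) - 1 = ((a:ℤ)^n - 1) * ((a:ℤ)^n + 1) := by
            rw [two_mul, pow_add]; ring
          rw [hfac2, he]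
          exact dvd_mul_left _ _
        have hdvd2 := hkey Ln (2*n) (by omega) (by omega) hdvd
        have hle : 2^(Ln - k0) ≤ 2*n := Nat.le_of_dvd (by omega) hdvd2
        set t := n + 1 - k0 with ht
        have h4 : t - 2 < 2^(t-2) := Nat.lt_two_pow_self
        have h5 : 2^t = 2^(t-2) * 4 := by
          rw [show t = (t-2)+2 by omega, pow_add]; norm_num
        have h6 : 2^t ≤ 2^(Ln - k0) := Nat.pow_le_pow_right (by norm_num) (by omega)
        omega
      have hcard : ((Finset.Icc 1 N).filter (fun n => 0 ∉ Nat.digits 2 (a^n))).card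
          ≤ 2*k0+2 := by
        refine le_trans (Finset.card_le_card hsub) ?_
        rw [Nat.card_Icc]
        omega
      exact_mod_cast hcard
    · -- b = 1
      refine ⟨1, one_pos, fun N hN => ?_⟩
      rw [h0, Real.rpow_zero, mul_one]
      have hempty : (Finset.Icc 1 N).filter (fun n => 1 ∉ Nat.digits 2 (a^n)) = ∅ := by
        rw [Finset.filter_eq_empty_iff]
        intro n _
        exact not_not.mpr (one_mem_digits_two (pow_ne_zero _ (by omega)))
      rw [hempty]
      norm_num
  · -- q ≥ 3
    have hq1R : (0:ℝ) < (q:ℝ) - 1 := by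
      have : (3:ℝ) ≤ (q:ℝ) := by exact_mod_cast hq3
      linarith
    refine ⟨2 * ((q:ℝ) - 1)^(k0+1), by positivity, fun N hN => ?_⟩
    set L := Nat.log q N with hL
    set k := k0 + L + 1 with hk
    set σ := Real.log ((q:ℝ) - 1) / Real.log q with hσdef
    have h1 : (((Finset.Icc 1 N).filter (fun n => b ∉ Nat.digits q (a ^ n))).card : ℝ)
        ≤ ((2 * (q-1)^k : ℕ) : ℝ) := by
      exact_mod_cast le_trans (hinjcard N hN) (card_avoid_digits hq3 hb k)
    have hcast : ((2 * (q-1)^k : ℕ) : ℝ) = 2 * ((q:ℝ) - 1)^k := by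
      push_cast [Nat.cast_sub (show 1 ≤ q by omega)]
      ring
    rw [hcast] at h1
    refine le_trans h1 ?_
    have hqR1 : (1:ℝ) < (q:ℝ) := by exact_mod_cast (show 1 < q by omega)
    have hq3R : (3:ℝ) ≤ (q:ℝ) := by exact_mod_cast hq3
    have hσ0 : 0 ≤ σ := div_nonneg (Real.log_nonneg (by linarith)) (Real.log_pos hqR1).le
    have hqσ : (q:ℝ) ^ σ = (q:ℝ) - 1 := by
      rw [hσdef, Real.rpow_def_of_pos (by linarith : (0:ℝ) < (q:ℝ))]
      rw [mul_comm, div_mul_cancel₀ _ (Real.log_pos hqR1).ne']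
      exact Real.exp_log (by linarith)
    have hmono : ((q:ℝ)-1)^L ≤ (N:ℝ) ^ σ := by
      have e1 : ((q:ℝ)-1)^L = ((q:ℝ)^σ)^L := by rw [hqσ]
      have e2 : ((q:ℝ)^σ)^L = (((q^L : ℕ) : ℝ)) ^ σ := by
        rw [← Real.rpow_natCast ((q:ℝ)^σ) L, ← Real.rpow_mul (by positivity), mul_comm,
          Real.rpow_mul (by positivity), Real.rpow_natCast]
        norm_cast
      rw [e1, e2]
      apply Real.rpow_le_rpow (by positivity) _ hσ0
      exact_mod_cast Nat.pow_log_le_self q (by omega : N ≠ 0)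
    have hsplit : ((q:ℝ)-1)^k = ((q:ℝ)-1)^(k0+1) * ((q:ℝ)-1)^L := by
      rw [show k = (k0+1) + L by omega, pow_add]
    rw [hsplit, mul_assoc]
    apply mul_le_mul_of_nonneg_left _ (by norm_num : (0:ℝ) ≤ 2)
    exact mul_le_mul_of_nonneg_left hmono (by positivity)

theorem digit_omission_bound_int
    (p : ℤ) (q : ℕ) (hp : 2 ≤ |p|) (hq : 2 ≤ q)
    (hcop : IsCoprime p (q : ℤ)) (b : ℕ) (hb : b < q) :
    ∃ C : ℝ, 0 < C ∧ ∀ N : ℕ, 1 ≤ N →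
      (((Finset.Icc 1 N).filter
          (fun n => b ∉ Nat.digits q ((p ^ n).natAbs))).card : ℝ) ≤
        C * (N : ℝ) ^ (Real.log (q - 1) / Real.log q) := by
  have ha : 2 ≤ p.natAbs := by
    rw [Int.abs_eq_natAbs] at hp
    exact_mod_cast hp
  have hcop' : Nat.Coprime p.natAbs q := by
    have h1 := Int.isCoprime_iff_gcd_eq_one.mp hcop
    rwa [Int.gcd, Int.natAbs_natCast] at h1
  obtain ⟨C, hC, hbound⟩ := main_nat ha hq hcop' b hb
  refine ⟨C, hC, fun N hN => ?_⟩
  simpa only [Int.natAbs_pow] using hbound N hN
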